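/- (Proposition 6, monotonicity of h^K_k) Let K ≥ 1 and 0 ≤ k ≤ K-1. Suppose (P_F, P_M) and (P_F', P_M') are two pairs in [0,1]² satisfying the robustness condition B(k; K, P_F) + B(k; K, 1-P_M) = 1 and B(k; K, P_F') + B(k; K, 1-P_M') = 1. If P_F < P_F', then P_M < P_M'. In other words, the function h^K_k implicitly defined by the robustness condition, mapping P_F to the corresponding P_M, is strictly monotonically increasing. -/

import Mathlib

/-- Binomial cumulative distribution function: probability of at most `k` successes out of
`K` trials, each with success probability `p`. -/
noncomputable def binCdf (K k : ℕ) (p : ℝ) : ℝ :=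
  ∑ i ∈ Finset.range (k + 1), (K.choose i : ℝ) * p ^ i * (1 - p) ^ (K - i)

lemma aux_choose (n i : ℕ) (h : i ≤ n) :
    (n + 1 - i) * (n+1).choose i = (n+1) * n.choose i := by
  have h1 : (n+1).choose i = (n+1).choose (n+1-i) := (Nat.choose_symm (by omega)).symm
  have h2 : (n+1) * n.choose (n-i) = (n+1).choose (n-i+1) * (n-i+1) :=
    Nat.add_one_mul_choose_eq n (n-i)
  have h3 : n.choose (n-i) = n.choose i := Nat.choose_symm h
  have h4 : n - i + 1 = n + 1 - i := by omega
  rw [h1, ← h4, ← h3, mul_comm]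
  exact h2.symm

lemma binCdf_hasDerivAt (n k : ℕ) (hk : k ≤ n) (p : ℝ) :
    HasDerivAt (binCdf (n+1) k)
      (-(((n:ℝ)+1) * (n.choose k : ℝ) * p^k * (1-p)^(n-k))) p := by
  set w : ℕ → ℝ := fun i =>
    if i = 0 then 0 else ((n:ℝ)+1) * (n.choose (i-1) : ℝ) * p^(i-1) * (1-p)^(n+1-i) with hw
  have key : ∀ i ∈ Finset.range (k+1),
      HasDerivAt (fun q : ℝ => ((n+1).choose i : ℝ) * q ^ i * (1 - q) ^ (n+1-i))
        (w i - w (i+1)) p := by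
    intro i hi
    have hik : i ≤ k := Nat.lt_succ_iff.mp (Finset.mem_range.mp hi)
    have hin : i ≤ n := le_trans hik hk
    have h1 : HasDerivAt (fun q : ℝ => ((n+1).choose i : ℝ) * q ^ i)
        (((n+1).choose i : ℝ) * ((i:ℝ) * p ^ (i-1))) p := (hasDerivAt_pow i p).const_mul _
    have h2 : HasDerivAt (fun q : ℝ => (1 - q) ^ (n+1-i))
        (((n+1-i : ℕ) : ℝ) * (1-p) ^ (n+1-i-1) * (-1)) p :=
      ((hasDerivAt_id p).const_sub 1).pow _
    have h3 := h1.fun_mul h2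
    refine h3.congr_deriv ?_
    symm
    have e1 : n + 1 - i - 1 = n - i := by omega
    rw [e1]
    match i with
    | 0 =>
      simp [hw]
    | j+1 =>
      have hjn : j + 1 ≤ n := hin
      have hj : j ≤ n := by omega
      have c1n : (n+1) * n.choose j = (n+1).choose (j+1) * (j+1) := Nat.add_one_mul_choose_eq n j
      have c1 : ((n:ℝ)+1) * (n.choose j:ℝ) = ((n+1).choose (j+1):ℝ) * ((j:ℝ)+1) := by
        exact_mod_cast c1n
      have c2n : (n - j) * (n+1).choose (j+1) = (n+1) * n.choose (j+1) := by
        have h := aux_choose n (j+1) hjn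
        rw [show n+1-(j+1) = n-j from by omega] at h
        exact h
      have c2 : ((n:ℝ) - j) * ((n+1).choose (j+1):ℝ) = ((n:ℝ)+1) * (n.choose (j+1):ℝ) := by
        have := congrArg (Nat.cast (R:=ℝ)) c2n
        push_cast [Nat.cast_sub hj] at this
        exact this
      have e2 : n + 1 - (j+1) = n - j := by omega
      have e3 : n + 1 - (j+1+1) = n - (j+1) := by omega
      simp only [hw, if_neg (Nat.succ_ne_zero j), if_neg (Nat.succ_ne_zero (j+1)),
        Nat.add_sub_cancel, e2, e3]
      have epow : (1-p)^(n-j) = (1-p)^(n-(j+1)) * (1-p) := by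
        rw [← pow_succ]
        congr 1
        omega
      rw [epow]
      push_cast [Nat.cast_sub hj]
      linear_combination (p^j * (1-p)^(n-(j+1)) * (1-p)) * c1 + (p^(j+1) * (1-p)^(n-(j+1))) * c2
  have hsum := HasDerivAt.fun_sum key
  have tele : ∑ i ∈ Finset.range (k+1), (w i - w (i+1)) = w 0 - w (k+1) :=
    Finset.sum_range_sub' w (k+1)
  rw [tele] at hsum
  have : w 0 - w (k+1) = -(((n:ℝ)+1) * (n.choose k : ℝ) * p^k * (1-p)^(n-k)) := by
    simp only [hw, if_pos rfl, if_neg (Nat.succ_ne_zero k), Nat.add_sub_cancel]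
    have : n + 1 - (k+1) = n - k := by omega
    rw [this]; ring
  rw [this] at hsum
  exact hsum

lemma binCdf_strictAntiOn (K k : ℕ) (hK : 1 ≤ K) (hk : k ≤ K - 1) :
    StrictAntiOn (binCdf K k) (Set.Icc (0:ℝ) 1) := by
  obtain ⟨n, rfl⟩ : ∃ n, K = n + 1 := ⟨K - 1, by omega⟩
  have hk' : k ≤ n := by omega
  have hcont : ContinuousOn (binCdf (n+1) k) (Set.Icc 0 1) :=
    fun x _ => ((binCdf_hasDerivAt n k hk' x).differentiableAt.continuousAt).continuousWithinAt
  apply strictAntiOn_of_deriv_neg (convex_Icc 0 1) hcont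
  intro x hx
  rw [interior_Icc] at hx
  rw [(binCdf_hasDerivAt n k hk' x).deriv]
  have h1 : (0:ℝ) < (n:ℝ) + 1 := by positivity
  have h2 : (0:ℝ) < (n.choose k : ℝ) := by
    exact_mod_cast Nat.choose_pos hk'
  have h3 : (0:ℝ) < x ^ k := pow_pos hx.1 _
  have h4 : (0:ℝ) < (1 - x) ^ (n - k) := pow_pos (by linarith [hx.2]) _
  have : (0:ℝ) < ((n:ℝ)+1) * (n.choose k : ℝ) * x ^ k * (1-x) ^ (n-k) := by positivity
  linarith

/-- Proposition 6, monotonicity of `h^K_k`: if two pairs `(P_F, P_M)` and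
`(P_F', P_M')` in `[0,1]²` satisfy the robustness condition
`B(k; K, P_F) + B(k; K, 1-P_M) = 1`, then `P_F < P_F'` implies `P_M < P_M'`. -/
theorem fusion_curve_strictMono (K k : ℕ) (hK : 1 ≤ K) (hk : k ≤ K - 1)
    (PF PM PF' PM' : ℝ)
    (hPF : PF ∈ Set.Icc (0:ℝ) 1) (hPM : PM ∈ Set.Icc (0:ℝ) 1)
    (hPF' : PF' ∈ Set.Icc (0:ℝ) 1) (hPM' : PM' ∈ Set.Icc (0:ℝ) 1)
    (h1 : binCdf K k PF + binCdf K k (1 - PM) = 1)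
    (h2 : binCdf K k PF' + binCdf K k (1 - PM') = 1)
    (hlt : PF < PF') : PM < PM' := by
  have hA := binCdf_strictAntiOn K k hK hk
  have hm : (1 - PM) ∈ Set.Icc (0:ℝ) 1 := ⟨by linarith [hPM.2], by linarith [hPM.1]⟩
  have hm' : (1 - PM') ∈ Set.Icc (0:ℝ) 1 := ⟨by linarith [hPM'.2], by linarith [hPM'.1]⟩
  have hf : binCdf K k PF' < binCdf K k PF := hA hPF hPF' hlt
  have hfm : binCdf K k (1 - PM) < binCdf K k (1 - PM') := by linarith
  have := (hA.lt_iff_gt hm hm').mp hfm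
  linarith
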